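/- Let B ≥ 1, let S ⊆ [−B, B]² be a 2-simplex (the convex hull of three affinely independent points of ℝ²), let ℓ : ℝ² → ℝ be an affine function, and let f : ℝ² → ℝ be defined by f(x) = ℓ(x) for x ∈ S and f(x) = 0 for x ∉ S. Then for every δ > 0 there exist N ≤ 9, affine functions h₁ⱼ, h₂ⱼ : ℝ² → ℝ, strictly positive reals μⱼ, and real coefficients cⱼ (1 ≤ j ≤ N) such that the Lebesgue measure of { x ∈ [−B, B]² : f(x) ≠ ℓ(x) + Σ_{j=1}^{N} cⱼ·σ(h₁ⱼ(x) − μⱼ·σ(h₂ⱼ(x))) } is less than δ. (This is the wide-network half of the two-dimensional simplex representation lemma: the affine function ℓ and at most nine two-dimensional fan-shaped terms represent f up to arbitrarily small measure.) -/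

import Mathlib

open MeasureTheory

/-- A function `(Fin D → ℝ) → ℝ` is affine if it is of the form
`x ↦ ∑ d, w d * x d + r`. -/
def IsAffineFn {D : ℕ} (g : (Fin D → ℝ) → ℝ) : Prop :=
  ∃ (w : Fin D → ℝ) (r : ℝ), ∀ x, g x = (∑ d, w d * x d) + r

lemma isAffineFn_affineMap (g : (Fin 2 → ℝ) →ᵃ[ℝ] ℝ) : IsAffineFn (⇑g) := by
  refine ⟨fun d => g.linear (fun j => if d = j then 1 else 0), g 0, fun x => ?_⟩
  have h : g x = g.linear x + g 0 := by
    conv_lhs => rw [g.decomp]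
    rfl
  rw [h, LinearMap.pi_apply_eq_sum_univ g.linear x]
  simp [smul_eq_mul, mul_comm]

lemma pair_eval (e p q L Λ M μ η : ℝ) (hη : 0 < η) (hL : 0 ≤ L) (hΛ : 0 ≤ Λ)
    (hM0 : 0 ≤ M) (hμ0 : 0 ≤ μ) (hM : M * η = L + 1) (hμ : μ * η = L + M * Λ + 1)
    (he : |e| ≤ L) (hq : |q| ≤ Λ) (hp' : η < |p|) (hq' : η < |q|) :
    max (M * q - μ * max p 0) 0 - max (e + M * q - μ * max p 0) 0
      = if p < 0 ∧ 0 < q then -e else 0 := by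
  have he1 := abs_le.mp he
  have hqΛ := abs_le.mp hq
  rcases lt_abs.mp hp' with hp | hp
  · have h1 : μ * η ≤ μ * p := mul_le_mul_of_nonneg_left hp.le hμ0
    have h2 : M * q ≤ M * Λ := mul_le_mul_of_nonneg_left hqΛ.2 hM0
    rw [max_eq_left (by linarith : (0:ℝ) ≤ p)]
    rw [max_eq_right (by nlinarith : M * q - μ * p ≤ 0),
        max_eq_right (by nlinarith : e + M * q - μ * p ≤ 0)]
    rw [if_neg (by intro h; linarith [h.1])]
    ring
  · rw [max_eq_right (by linarith : p ≤ 0)]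
    rcases lt_abs.mp hq' with hq2 | hq2
    · have h3 : M * η ≤ M * q := mul_le_mul_of_nonneg_left hq2.le hM0
      rw [max_eq_left (by nlinarith : (0:ℝ) ≤ M * q - μ * 0),
          max_eq_left (by nlinarith : (0:ℝ) ≤ e + M * q - μ * 0)]
      rw [if_pos ⟨by linarith, by linarith⟩]
      ring
    · have h3 : M * q ≤ M * (-η) := mul_le_mul_of_nonneg_left (by linarith) hM0
      rw [max_eq_right (by nlinarith : M * q - μ * 0 ≤ 0),
          max_eq_right (by nlinarith : e + M * q - μ * 0 ≤ 0)]
      rw [if_neg (by intro h; linarith [h.2])]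
      ring


lemma isAffineFn_add_smul {f g : (Fin 2 → ℝ) → ℝ} (hf : IsAffineFn f) (hg : IsAffineFn g)
    (a : ℝ) : IsAffineFn (fun x => f x + a * g x) := by
  obtain ⟨w, r, hw⟩ := hf
  obtain ⟨w', r', hw'⟩ := hg
  refine ⟨fun d => w d + a * w' d, r + a * r', fun x => ?_⟩
  simp only [hw, hw', Fin.sum_univ_two]
  ring

lemma isAffineFn_smul {g : (Fin 2 → ℝ) → ℝ} (hg : IsAffineFn g) (a : ℝ) :
    IsAffineFn (fun x => a * g x) := by
  obtain ⟨w', r', hw'⟩ := hg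
  refine ⟨fun d => a * w' d, a * r', fun x => ?_⟩
  simp only [hw', Fin.sum_univ_two]
  ring

lemma box_bound (B : ℝ) (w : Fin 2 → ℝ) (r : ℝ) (x : Fin 2 → ℝ)
    (hx : x ∈ Set.Icc (fun _ => -B) (fun _ => B)) :
    |(∑ d, w d * x d) + r| ≤ |w 0| * B + |w 1| * B + |r| := by
  obtain ⟨hx1, hx2⟩ := hx
  have h0 : |x 0| ≤ B := abs_le.mpr ⟨hx1 0, hx2 0⟩
  have h1 : |x 1| ≤ B := abs_le.mpr ⟨hx1 1, hx2 1⟩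
  rw [Fin.sum_univ_two]
  have a1 : |w 0 * x 0 + w 1 * x 1 + r| ≤ |w 0 * x 0 + w 1 * x 1| + |r| := abs_add_le _ _
  have a2 : |w 0 * x 0 + w 1 * x 1| ≤ |w 0 * x 0| + |w 1 * x 1| := abs_add_le _ _
  rw [abs_mul, abs_mul] at a2
  have b0 : |w 0| * |x 0| ≤ |w 0| * B := mul_le_mul_of_nonneg_left h0 (abs_nonneg _)
  have b1 : |w 1| * |x 1| ≤ |w 1| * B := mul_le_mul_of_nonneg_left h1 (abs_nonneg _)
  linarith

lemma forall_fin_three {P : Fin 3 → Prop} : (∀ m, P m) ↔ P 0 ∧ P 1 ∧ P 2 := by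
  refine ⟨fun h => ⟨h 0, h 1, h 2⟩, fun h m => ?_⟩
  fin_cases m
  · exact h.1
  · exact h.2.1
  · exact h.2.2

lemma strip_volume (B ε : ℝ) (hε : 0 ≤ ε) (w : Fin 2 → ℝ) (r : ℝ) (d : Fin 2) (hw : w d ≠ 0) :
    volume {x : Fin 2 → ℝ | x ∈ Set.Icc (fun _ => -B) (fun _ => B) ∧ |(∑ i, w i * x i) + r| ≤ ε}
      ≤ ENNReal.ofReal (|w d|⁻¹ * (2 * ε * (2 * B))) := by
  have key : ∀ (Mt : Matrix (Fin 2) (Fin 2) ℝ), |Mt.det| = |w d| →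
      (∀ x : Fin 2 → ℝ, Mt.mulVec x 0 = w 0 * x 0 + w 1 * x 1) →
      (∀ x : Fin 2 → ℝ, x ∈ Set.Icc (fun _ => -B) (fun _ => B) →
        -B ≤ Mt.mulVec x 1 ∧ Mt.mulVec x 1 ≤ B) →
      volume {x : Fin 2 → ℝ | x ∈ Set.Icc (fun _ => -B) (fun _ => B) ∧ |(∑ i, w i * x i) + r| ≤ ε}
        ≤ ENNReal.ofReal (|w d|⁻¹ * (2 * ε * (2 * B))) := by
    intro Mt habs h0 h1
    have hdetne : Mt.det ≠ 0 := by
      intro h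
      rw [h, abs_zero] at habs
      exact hw (abs_eq_zero.mp habs.symm)
    have hdet' : LinearMap.det (Matrix.toLin' Mt) = Mt.det := LinearMap.det_toLin' Mt
    have hsub : {x : Fin 2 → ℝ | x ∈ Set.Icc (fun _ => -B) (fun _ => B) ∧ |(∑ i, w i * x i) + r| ≤ ε}
        ⊆ (Matrix.toLin' Mt) ⁻¹' (Set.Icc ![-ε - r, -B] ![ε - r, B]) := by
      rintro x ⟨hxb, hxs⟩
      rw [Fin.sum_univ_two] at hxs
      have h2 := abs_le.mp hxs
      have h3 := h1 x hxb
      simp only [Set.mem_preimage, Set.mem_Icc, Matrix.toLin'_apply]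
      constructor <;> rw [Pi.le_def] <;> intro i <;> fin_cases i <;>
        simp only [Fin.zero_eta, Fin.mk_one, Matrix.cons_val_zero, Matrix.cons_val_one,
          Matrix.head_cons] <;>
        first
        | (rw [h0 x]; linarith [h2.1, h2.2])
        | exact h3.1
        | exact h3.2
    refine (measure_mono hsub).trans ?_
    rw [Measure.addHaar_preimage_linearMap volume (by rw [hdet']; exact hdetne)]
    rw [Real.volume_Icc_pi, Fin.prod_univ_two]
    simp only [Matrix.cons_val_zero, Matrix.cons_val_one, Matrix.head_cons]
    rw [hdet', abs_inv, habs]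
    have e1 : ε - r - (-ε - r) = 2 * ε := by ring
    have e2 : B - -B = 2 * B := by ring
    rw [e1, e2]
    rcases le_or_gt B 0 with hB | hB
    · have : ENNReal.ofReal (2 * B) = 0 := ENNReal.ofReal_eq_zero.mpr (by linarith)
      rw [this, mul_zero, mul_zero]
      exact zero_le
    · rw [← ENNReal.ofReal_mul (by linarith : (0:ℝ) ≤ 2 * ε),
          ← ENNReal.ofReal_mul (inv_nonneg.mpr (abs_nonneg _))]
  fin_cases d
  · refine key !![w 0, w 1; 0, 1] ?_ ?_ ?_
    · simp [Matrix.det_fin_two_of]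
    · intro x
      simp [Matrix.mulVec, dotProduct, Fin.sum_univ_two]
    · intro x hx
      have := hx.1 1
      have := hx.2 1
      simp only [Matrix.mulVec, dotProduct] at *
      simp [Fin.sum_univ_two]
      constructor <;> simpa using ‹_›
  · refine key !![w 0, w 1; 1, 0] ?_ ?_ ?_
    · simp [Matrix.det_fin_two_of]
    · intro x
      simp [Matrix.mulVec, dotProduct, Fin.sum_univ_two]
    · intro x hx
      have := hx.1 0
      have := hx.2 0
      simp only [Matrix.mulVec, dotProduct] at *
      simp [Fin.sum_univ_two]
      constructor <;> simpa using ‹_›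

set_option maxHeartbeats 1000000 in
/-- The wide-network half of the two-dimensional simplex representation lemma:
the affine function `ℓ` and at most nine two-dimensional fan-shaped terms
`σ(h₁ⱼ(x) - μⱼ·σ(h₂ⱼ(x)))` represent, up to arbitrarily small Lebesgue measure,
the function `f` equal to `ℓ` on a 2-simplex `S ⊆ [-B, B]²` and `0` outside.
Here `σ(u) = max u 0` is ReLU. -/
theorem simplex_wide_representation_2d (B : ℝ) (hB : 1 ≤ B)
    (v : Fin 3 → (Fin 2 → ℝ)) (hv : AffineIndependent ℝ v)
    (S : Set (Fin 2 → ℝ)) (hS : S = convexHull ℝ (Set.range v))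
    (hSB : S ⊆ Set.Icc (fun _ => -B) (fun _ => B))
    (ℓ f : (Fin 2 → ℝ) → ℝ) (hℓ : IsAffineFn ℓ)
    (hf : f = S.indicator ℓ) :
    ∀ δ > (0 : ℝ), ∃ N : ℕ, N ≤ 9 ∧
      ∃ (h₁ h₂ : Fin N → (Fin 2 → ℝ) → ℝ) (μ c : Fin N → ℝ),
        (∀ j, IsAffineFn (h₁ j)) ∧ (∀ j, IsAffineFn (h₂ j)) ∧ (∀ j, 0 < μ j) ∧
        volume {x : Fin 2 → ℝ | x ∈ Set.Icc (fun _ => -B) (fun _ => (B : ℝ)) ∧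
            f x ≠ ℓ x + ∑ j, c j * max (h₁ j x - μ j * max (h₂ j x) 0) 0} <
          ENNReal.ofReal δ := by
  intro δ hδ
  have hcard : Fintype.card (Fin 3) = Module.finrank ℝ (Fin 2 → ℝ) + 1 := by
    simp [Module.finrank_fin_fun]
  have htot : affineSpan ℝ (Set.range v) = ⊤ :=
    hv.affineSpan_eq_top_iff_card_eq_finrank_add_one.mpr hcard
  let b : AffineBasis (Fin 3) ℝ (Fin 2 → ℝ) := ⟨v, hv, htot⟩
  have hbv : ⇑b = v := rfl
  have hSchar : ∀ x, x ∈ S ↔ ∀ m, 0 ≤ b.coord m x := by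
    intro x
    rw [hS, ← hbv, b.convexHull_eq_nonneg_coord]
    exact Iff.rfl
  have hsum1 : ∀ x, b.coord 0 x + b.coord 1 x + b.coord 2 x = 1 := by
    intro x
    have := b.sum_coord_apply_eq_one x
    rwa [Fin.sum_univ_three] at this
  have hAff : ∀ m : Fin 3, IsAffineFn (fun x => b.coord m x) :=
    fun m => isAffineFn_affineMap (b.coord m)
  choose wc rc hwc0 using hAff
  have hwc : ∀ (m : Fin 3) (x : Fin 2 → ℝ), b.coord m x = (∑ d, wc m d * x d) + rc m :=
    fun m x => hwc0 m x
  obtain ⟨wl, rl, hwl⟩ := hℓ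
  have hwne : ∀ m : Fin 3, ∃ d, wc m d ≠ 0 := by
    intro m
    by_contra hcon
    push_neg at hcon
    obtain ⟨n, hn⟩ := exists_ne m
    have h1 : b.coord m (v m) = 1 := by rw [← hbv]; exact b.coord_apply_eq m
    have h0 : b.coord m (v n) = 0 := by rw [← hbv]; exact b.coord_apply_ne (Ne.symm hn)
    have e1 := hwc0 m (v m)
    have e2 := hwc0 m (v n)
    simp only [hcon, zero_mul, Finset.sum_const_zero, zero_add] at e1 e2
    rw [h1] at e1
    rw [h0] at e2
    linarith
  have hB0 : (0:ℝ) < B := by linarith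
  set L : ℝ := |wl 0| * B + |wl 1| * B + |rl| with hLdef
  have hL0 : 0 ≤ L := by positivity
  set C : Fin 3 → ℝ := fun m => |wc m 0| * B + |wc m 1| * B + |rc m| with hCdef
  have hC0 : ∀ m, 0 ≤ C m := fun m => by positivity
  set Λ : ℝ := C 0 + C 1 + C 2 with hΛdef
  have hΛ0 : 0 ≤ Λ := by
    have := hC0 0; have := hC0 1; have := hC0 2; linarith
  have hCΛ : ∀ m, C m ≤ Λ := by
    have h0 := hC0 0; have h1 := hC0 1; have h2 := hC0 2
    exact forall_fin_three.mpr ⟨by linarith, by linarith, by linarith⟩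
  choose dm hdm using hwne
  have hW0 : ∀ m : Fin 3, 0 < |wc m (dm m)| := fun m => abs_pos.mpr (hdm m)
  have hP0 : 0 < (|wc 0 (dm 0)|⁻¹ + |wc 1 (dm 1)|⁻¹ + |wc 2 (dm 2)|⁻¹) * (4 * B) + 1 := by
    have h0 := inv_nonneg.mpr (hW0 0).le
    have h1 := inv_nonneg.mpr (hW0 1).le
    have h2 := inv_nonneg.mpr (hW0 2).le
    have : 0 ≤ (|wc 0 (dm 0)|⁻¹ + |wc 1 (dm 1)|⁻¹ + |wc 2 (dm 2)|⁻¹) * (4 * B) :=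
      mul_nonneg (by linarith) (by linarith)
    linarith
  set P : ℝ := (|wc 0 (dm 0)|⁻¹ + |wc 1 (dm 1)|⁻¹ + |wc 2 (dm 2)|⁻¹) * (4 * B) + 1 with hPdef
  set η : ℝ := δ / P with hηdef
  have hη0 : 0 < η := div_pos hδ hP0
  set M : ℝ := (L + 1) / η with hMdef
  have hM0 : 0 < M := div_pos (by linarith) hη0
  have hMη : M * η = L + 1 := div_mul_cancel₀ _ (ne_of_gt hη0)
  set μ0 : ℝ := (L + M * Λ + 1) / η with hμdef
  have hμ0 : 0 < μ0 := div_pos (by nlinarith) hη0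
  have hμη : μ0 * η = L + M * Λ + 1 := div_mul_cancel₀ _ (ne_of_gt hη0)
  have haff1 : ∀ m : Fin 3, IsAffineFn (fun x => ℓ x + M * b.coord m x) :=
    fun m => isAffineFn_add_smul ⟨wl, rl, hwl⟩ ⟨wc m, rc m, hwc m⟩ M
  have haff2 : ∀ m : Fin 3, IsAffineFn (fun x => M * b.coord m x) :=
    fun m => isAffineFn_smul ⟨wc m, rc m, hwc m⟩ M
  have hbound : ∀ x ∈ Set.Icc (fun _ => -B) (fun _ => (B:ℝ)), |ℓ x| ≤ L := by
    intro x hx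
    rw [hwl x]
    exact box_bound B wl rl x hx
  have hboundc : ∀ (m : Fin 3), ∀ x ∈ Set.Icc (fun _ => -B) (fun _ => (B:ℝ)),
      |b.coord m x| ≤ Λ := by
    intro m x hx
    have h := box_bound B (wc m) (rc m) x hx
    rw [← hwc m x] at h
    exact h.trans (hCΛ m)
  refine ⟨6, by norm_num,
    ![fun x => ℓ x + M * b.coord 1 x, fun x => M * b.coord 1 x,
      fun x => ℓ x + M * b.coord 2 x, fun x => M * b.coord 2 x,
      fun x => ℓ x + M * b.coord 0 x, fun x => M * b.coord 0 x],
    ![fun x => b.coord 0 x, fun x => b.coord 0 x, fun x => b.coord 1 x,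
      fun x => b.coord 1 x, fun x => b.coord 2 x, fun x => b.coord 2 x],
    fun _ => μ0, ![-1, 1, -1, 1, -1, 1], ?_, ?_, fun _ => hμ0, ?_⟩
  · intro j
    fin_cases j <;> first | exact haff1 _ | exact haff2 _
  · intro j
    fin_cases j <;> exact ⟨wc _, rc _, hwc _⟩
  refine lt_of_le_of_lt (measure_mono (?_ :
      _ ⊆ {x : Fin 2 → ℝ | x ∈ Set.Icc (fun _ => -B) (fun _ => B) ∧
             |(∑ i, wc 0 i * x i) + rc 0| ≤ η} ∪
           {x : Fin 2 → ℝ | x ∈ Set.Icc (fun _ => -B) (fun _ => B) ∧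
             |(∑ i, wc 1 i * x i) + rc 1| ≤ η} ∪
           {x : Fin 2 → ℝ | x ∈ Set.Icc (fun _ => -B) (fun _ => B) ∧
             |(∑ i, wc 2 i * x i) + rc 2| ≤ η})) ?_
  · rintro x ⟨hxb, hxne⟩
    by_contra hnot
    simp only [Set.mem_union, Set.mem_setOf_eq, not_or, not_and, not_le] at hnot
    obtain ⟨⟨g0, g1⟩, g2⟩ := hnot
    have k0 : η < |b.coord 0 x| := by rw [hwc 0 x]; exact g0 hxb
    have k1 : η < |b.coord 1 x| := by rw [hwc 1 x]; exact g1 hxb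
    have k2 : η < |b.coord 2 x| := by rw [hwc 2 x]; exact g2 hxb
    apply hxne
    have hbe := hbound x hxb
    have hb0 := hboundc 0 x hxb
    have hb1 := hboundc 1 x hxb
    have hb2 := hboundc 2 x hxb
    have E0 := pair_eval (ℓ x) (b.coord 0 x) (b.coord 1 x) L Λ M μ0 η hη0 hL0 hΛ0
      hM0.le hμ0.le hMη hμη hbe hb1 k0 k1
    have E1 := pair_eval (ℓ x) (b.coord 1 x) (b.coord 2 x) L Λ M μ0 η hη0 hL0 hΛ0
      hM0.le hμ0.le hMη hμη hbe hb2 k1 k2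
    have E2 := pair_eval (ℓ x) (b.coord 2 x) (b.coord 0 x) L Λ M μ0 η hη0 hL0 hΛ0
      hM0.le hμ0.le hMη hμη hbe hb0 k2 k0
    have hs := hsum1 x
    rw [hf]
    simp only [Fin.sum_univ_succ, Fin.sum_univ_zero, Matrix.cons_val_zero, Matrix.cons_val_succ,
      add_zero]
    rcases lt_abs.mp k0 with c0 | c0 <;> rcases lt_abs.mp k1 with c1 | c1 <;>
      rcases lt_abs.mp k2 with c2 | c2
    · have hxS : x ∈ S := (hSchar x).mpr (forall_fin_three.mpr
        ⟨by linarith, by linarith, by linarith⟩)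
      rw [Set.indicator_of_mem hxS]
      rw [if_neg (by rintro ⟨u1, u2⟩; linarith)] at E0 E1 E2
      linarith
    · have hxS : x ∉ S := fun hmem => by have := (hSchar x).mp hmem 2; linarith
      rw [Set.indicator_of_notMem hxS]
      rw [if_neg (by rintro ⟨u1, u2⟩; linarith)] at E0 E1
      rw [if_pos ⟨by linarith, by linarith⟩] at E2
      linarith
    · have hxS : x ∉ S := fun hmem => by have := (hSchar x).mp hmem 1; linarith
      rw [Set.indicator_of_notMem hxS]
      rw [if_neg (by rintro ⟨u1, u2⟩; linarith)] at E0 E2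
      rw [if_pos ⟨by linarith, by linarith⟩] at E1
      linarith
    · have hxS : x ∉ S := fun hmem => by have := (hSchar x).mp hmem 1; linarith
      rw [Set.indicator_of_notMem hxS]
      rw [if_neg (by rintro ⟨u1, u2⟩; linarith)] at E0 E1
      rw [if_pos ⟨by linarith, by linarith⟩] at E2
      linarith
    · have hxS : x ∉ S := fun hmem => by have := (hSchar x).mp hmem 0; linarith
      rw [Set.indicator_of_notMem hxS]
      rw [if_neg (by rintro ⟨u1, u2⟩; linarith)] at E1 E2
      rw [if_pos ⟨by linarith, by linarith⟩] at E0
      linarith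
    · have hxS : x ∉ S := fun hmem => by have := (hSchar x).mp hmem 0; linarith
      rw [Set.indicator_of_notMem hxS]
      rw [if_neg (by rintro ⟨u1, u2⟩; linarith)] at E1 E2
      rw [if_pos ⟨by linarith, by linarith⟩] at E0
      linarith
    · have hxS : x ∉ S := fun hmem => by have := (hSchar x).mp hmem 0; linarith
      rw [Set.indicator_of_notMem hxS]
      rw [if_neg (by rintro ⟨u1, u2⟩; linarith)] at E0 E2
      rw [if_pos ⟨by linarith, by linarith⟩] at E1
      linarith
    · exfalso; linarith
  · refine lt_of_le_of_lt ((measure_union_le _ _).trans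
      (add_le_add_left (measure_union_le _ _) _)) ?_
    have hv0 := strip_volume B η hη0.le (wc 0) (rc 0) (dm 0) (hdm 0)
    have hv1 := strip_volume B η hη0.le (wc 1) (rc 1) (dm 1) (hdm 1)
    have hv2 := strip_volume B η hη0.le (wc 2) (rc 2) (dm 2) (hdm 2)
    refine lt_of_le_of_lt (add_le_add (add_le_add hv0 hv1) hv2) ?_
    rw [← ENNReal.ofReal_add (by positivity) (by positivity),
        ← ENNReal.ofReal_add (by positivity) (by positivity)]
    rw [ENNReal.ofReal_lt_ofReal_iff hδ]
    have hsum : |wc 0 (dm 0)|⁻¹ * (2 * η * (2 * B)) + |wc 1 (dm 1)|⁻¹ * (2 * η * (2 * B)) +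
        |wc 2 (dm 2)|⁻¹ * (2 * η * (2 * B)) = P * η - η := by
      rw [hPdef]; ring
    have hPη : P * η = δ := by
      rw [hηdef]; field_simp
    have hfin : |wc 0 (dm 0)|⁻¹ * (2 * η * (2 * B)) + |wc 1 (dm 1)|⁻¹ * (2 * η * (2 * B)) +
        |wc 2 (dm 2)|⁻¹ * (2 * η * (2 * B)) = δ - η := by rw [hsum, hPη]
    linarith
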